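/- For every C ∈ ℕ and every width w > 0, there exist E₀ ∈ ℝ and a nonzero f ∈ Ran χ_{[E₀−w, E₀]}(−Δ) on 𝕋² such that f vanishes to order at least C at 0. -/

import Mathlib

open Complex Polynomial Finset GaussianInt

noncomputable section
namespace S17


def G : GaussianInt := ⟨3, 4⟩
def Gc : GaussianInt := ⟨3, -4⟩

lemma G_mul_Gc : G * Gc = (25 : GaussianInt) := by
  ext <;> simp [G, Gc, Zsqrtd.re_mul, Zsqrtd.im_mul]

lemma invariant (n : ℕ) : (((G^n).re : ZMod 5) + 2 * ((G^n).im : ZMod 5)) = 1 := by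
  induction n with
  | zero => simp
  | succ k ih =>
      have h1 : (G ^ (k+1)).re = 3 * (G^k).re - 4 * (G^k).im := by
        rw [pow_succ, mul_comm]
        simp [G, Zsqrtd.re_mul]; ring
      have h2 : (G ^ (k+1)).im = 3 * (G^k).im + 4 * (G^k).re := by
        rw [pow_succ, mul_comm]
        simp [G, Zsqrtd.im_mul]
      rw [h1, h2]
      push_cast
      linear_combination ih + 2 * (((G^k).re : ZMod 5)) * (by decide : (5 : ZMod 5) = 0)

lemma key (n : ℕ) (hn : n ≠ 0) : G ^ n ≠ (5 : GaussianInt) ^ n := by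
  intro h
  have h5 : ((5:GaussianInt)^n) = ((5^n : ℤ) : GaussianInt) := by push_cast; ring
  have hre : (G^n).re = 5^n := by rw [h, h5, Zsqrtd.re_intCast]
  have him : (G^n).im = 0 := by rw [h, h5, Zsqrtd.im_intCast]
  have := invariant n
  rw [hre, him] at this
  push_cast at this
  rw [show (5 : ZMod 5) = 0 from by decide, zero_pow hn] at this
  revert this; decide


lemma G_ne : G ≠ 0 := by
  intro h; have := congrArg Zsqrtd.re h; simp [G] at this

lemma Gc_ne : Gc ≠ 0 := by
  intro h; have := congrArg Zsqrtd.re h; simp [Gc] at this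

lemma GdGcd {d : ℕ} (h : G ^ d = Gc ^ d) : d = 0 := by
  by_contra hd
  apply key (2 * d) (by omega)
  have h1 : G ^ (2 * d) = (G * Gc) ^ d := by
    rw [two_mul, pow_add]; nth_rewrite 2 [h]; rw [mul_pow]
  rw [h1, G_mul_Gc, show (25 : GaussianInt) = 5 ^ 2 from by norm_num, ← pow_mul]

lemma inj {m j j' : ℕ} (hj : j ≤ m) (hj' : j' ≤ m)
    (h : G ^ j * Gc ^ (m - j) = G ^ j' * Gc ^ (m - j')) : j = j' := by
  have base : ∀ {a b : ℕ}, b ≤ a → a ≤ m →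
      G ^ a * Gc ^ (m - a) = G ^ b * Gc ^ (m - b) → a = b := by
    intro a b hba ham hab
    have hd : G ^ (a - b) = Gc ^ (a - b) := by
      have hnz : G ^ b * Gc ^ (m - a) ≠ 0 :=
        mul_ne_zero (pow_ne_zero _ G_ne) (pow_ne_zero _ Gc_ne)
      apply mul_right_cancel₀ hnz
      calc G ^ (a - b) * (G ^ b * Gc ^ (m - a))
          = G ^ a * Gc ^ (m - a) := by
            rw [← mul_assoc, ← pow_add, Nat.sub_add_cancel hba]
        _ = G ^ b * Gc ^ (m - b) := hab
        _ = Gc ^ (a - b) * (G ^ b * Gc ^ (m - a)) := by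
            rw [show m - b = (a - b) + (m - a) from by omega, pow_add]; ring
      
    have := GdGcd hd
    omega
  rcases le_total j' j with hle | hle
  · exact base hle hj h
  · exact (base hle hj' h.symm).symm

def q : ℂ := (3 + 4 * Complex.I) / 5

lemma I_fact : (3 + 4 * Complex.I) * (3 - 4 * Complex.I) = 25 := by
  linear_combination (-16 : ℂ) * Complex.I_sq

lemma num_ne : (3 + 4 * Complex.I) ≠ 0 := by
  intro h
  have := congrArg Complex.im h
  simp at this

lemma num_ne' : (3 - 4 * Complex.I) ≠ 0 := by
  intro h
  have := congrArg Complex.im h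
  simp at this

lemma q_ne : q ≠ 0 := div_ne_zero num_ne (by norm_num)

lemma five_q : (3 + 4 * Complex.I) = 5 * q := by
  rw [q]; field_simp

lemma q_inv : (3 - 4 * Complex.I) = 5 * q⁻¹ := by
  rw [q, eq_comm, inv_div, mul_div_assoc', div_eq_iff num_ne]
  linear_combination -I_fact

lemma pow_pow (a b : ℕ) :
    (3 + 4 * Complex.I) ^ a * (3 - 4 * Complex.I) ^ b
      = (5 : ℂ) ^ (a + b) * q ^ ((a : ℤ) - (b : ℤ)) := by
  have e1 : (3 + 4 * Complex.I) ^ a = (5:ℂ) ^ a * q ^ (a : ℤ) := by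
    rw [five_q, mul_pow, zpow_natCast]
  have e2 : (3 - 4 * Complex.I) ^ b = (5:ℂ) ^ b * q ^ (-(b : ℤ)) := by
    rw [q_inv, mul_pow, zpow_neg, zpow_natCast, inv_pow]
  rw [e1, e2, pow_add, sub_eq_add_neg, zpow_add₀ q_ne]
  ring

lemma G_c : (G : ℂ) = 3 + 4 * Complex.I := by
  rw [show G = (⟨3,4⟩ : GaussianInt) from rfl, toComplex_def']; push_cast; ring

lemma Gc_c : (Gc : ℂ) = 3 - 4 * Complex.I := by
  rw [show Gc = (⟨3,-4⟩ : GaussianInt) from rfl, toComplex_def']; push_cast; ring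

lemma z_formula {m j : ℕ} (hj : j ≤ m) :
    ((G ^ j * Gc ^ (m - j) : GaussianInt) : ℂ) = (5 : ℂ) ^ m * q ^ (2 * (j : ℤ) - m) := by
  simp only [toComplex_mul, map_pow]
  rw [G_c, Gc_c, pow_pow]
  rw [Nat.add_sub_cancel' hj]
  congr 1
  rw [Nat.cast_sub hj]
  ring_nf

lemma star_G : star G = Gc := by ext <;> simp [G, Gc]

lemma star_Gc : star Gc = G := by ext <;> simp [G, Gc]

lemma star_prod {m j : ℕ} : star (G ^ j * Gc ^ (m - j)) = Gc ^ j * G ^ (m - j) := by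
  rw [star_mul', star_pow, star_pow, star_G, star_Gc]




def P (Cn : ℕ) : Polynomial ℂ :=
  ∏ s ∈ Finset.range (2*Cn+1), (X - Polynomial.C (q ^ (2*(s:ℤ) - 2*Cn)))

lemma P_monic (Cn : ℕ) : (P Cn).Monic :=
  monic_prod_of_monic _ _ fun s _ => monic_X_sub_C _

lemma P_natDegree (Cn : ℕ) : (P Cn).natDegree = 2*Cn+1 := by
  rw [P, natDegree_prod_of_monic _ _ fun s _ => monic_X_sub_C _]
  simp

lemma P_coeff_top (Cn : ℕ) : (P Cn).coeff (2*Cn+1) = 1 := by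
  have h := (P_monic Cn).coeff_natDegree
  rwa [P_natDegree] at h

lemma P_eval_root (Cn : ℕ) (t : ℤ) (h1 : -(Cn:ℤ) ≤ t) (h2 : t ≤ Cn) :
    (P Cn).eval (q ^ (2*t)) = 0 := by
  rw [P, eval_prod]
  apply Finset.prod_eq_zero (i := (t + Cn).toNat)
  · exact Finset.mem_range.2 (by omega)
  · rw [eval_sub, eval_X, eval_C, sub_eq_zero]
    congr 1
    omega

lemma zpow_zpow (e : ℤ) (p : ℕ) : (q ^ e) ^ p = q ^ (e * p) := by
  rw [← zpow_natCast (q ^ e) p, ← zpow_mul]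

lemma cpow (Cn n j p : ℕ) (hp : p ≤ n) :
    ((5:ℂ)^(2*Cn+1) * q^(2*(j:ℤ) - (2*Cn+1)))^p
      * ((5:ℂ)^(2*Cn+1) * q^((2*Cn+1:ℤ) - 2*(j:ℤ)))^(n-p)
    = (5:ℂ)^((2*Cn+1)*n)
      * ((q^(2*(2*(p:ℤ)-n)))^j * q^(-((2*Cn+1:ℤ)*(2*(p:ℤ)-n)))) := by
  rw [mul_pow, mul_pow, ← pow_mul, ← pow_mul, mul_mul_mul_comm,
    ← pow_add, zpow_zpow, zpow_zpow, zpow_zpow, ← zpow_add₀ q_ne, ← zpow_add₀ q_ne]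
  congr 1
  · congr 1
    rw [← Nat.mul_add, Nat.add_sub_cancel' hp]
  · congr 1
    push_cast [Nat.cast_sub hp]
    ring

lemma moment (Cn n : ℕ) (hn : n ≤ Cn) (v vb : ℂ) :
    ∑ j ∈ Finset.range (2*Cn+2), (P Cn).coeff j *
      (((5:ℂ)^(2*Cn+1) * q^(2*(j:ℤ) - (2*Cn+1)) * vb
        + (5:ℂ)^(2*Cn+1) * q^((2*Cn+1:ℤ) - 2*(j:ℤ)) * v) / 2) ^ n = 0 := by
  have hsum : ∀ j ∈ Finset.range (2*Cn+2), (P Cn).coeff j *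
      (((5:ℂ)^(2*Cn+1) * q^(2*(j:ℤ) - (2*Cn+1)) * vb
        + (5:ℂ)^(2*Cn+1) * q^((2*Cn+1:ℤ) - 2*(j:ℤ)) * v) / 2) ^ n
      = ∑ p ∈ Finset.range (n+1), ((P Cn).coeff j * (q^(2*(2*(p:ℤ)-n)))^j)
          * (q^(-((2*Cn+1:ℤ)*(2*(p:ℤ)-n))) * (5:ℂ)^((2*Cn+1)*n)
              * vb^p * v^(n-p) * (n.choose p) / 2^n) := by
    intro j _
    rw [div_pow, add_pow, Finset.sum_div, Finset.mul_sum]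
    apply Finset.sum_congr rfl
    intro p hp
    have hp' : p ≤ n := by simpa using Nat.lt_succ_iff.mp (Finset.mem_range.mp hp)
    linear_combination ((P Cn).coeff j * vb^p * v^(n-p) * (n.choose p) / 2^n)
      * cpow Cn n j p hp'
  rw [Finset.sum_congr rfl hsum, Finset.sum_comm]
  apply Finset.sum_eq_zero
  intro p hp
  have hp' : p ≤ n := Nat.lt_succ_iff.mp (Finset.mem_range.mp hp)
  rw [← Finset.sum_mul]
  have hev : ∑ j ∈ Finset.range (2*Cn+2), (P Cn).coeff j * (q^(2*(2*(p:ℤ)-n)))^j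
      = (P Cn).eval (q^(2*(2*(p:ℤ)-n))) := by
    rw [eval_eq_sum_range' (by rw [P_natDegree]; omega : (P Cn).natDegree < 2*Cn+2)]
  rw [hev, P_eval_root Cn (2*(p:ℤ)-n) (by omega) (by omega), zero_mul]


lemma znorm_pow (z : GaussianInt) (n : ℕ) : Zsqrtd.norm (z ^ n) = (Zsqrtd.norm z) ^ n := by
  induction n with
  | zero => simp [Zsqrtd.norm_one]
  | succ k ih => rw [pow_succ, Zsqrtd.norm_mul, ih, pow_succ]

lemma norm_G : Zsqrtd.norm G = 25 := by rw [Zsqrtd.norm_def]; simp [G]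

lemma norm_Gc : Zsqrtd.norm Gc = 25 := by rw [Zsqrtd.norm_def]; simp [Gc]

lemma coord_abs (x : EuclideanSpace ℝ (Fin 2)) (i : Fin 2) : |x i| ≤ ‖x‖ := by
  rw [EuclideanSpace.norm_eq, ← Real.sqrt_sq_eq_abs]
  apply Real.sqrt_le_sqrt
  have h : x i ^ 2 = ‖x i‖ ^ 2 := by rw [Real.norm_eq_abs (x i), _root_.sq_abs]
  rw [h]
  exact Finset.single_le_sum (f := fun i => ‖x i‖ ^ 2) (fun _ _ => sq_nonneg _)
    (Finset.mem_univ i)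

end S17



/-- `f` vanishes to order (at least) `N` at `0`. -/
def VanishesToOrder2 (f : EuclideanSpace ℝ (Fin 2) → ℂ) (N : ℕ) : Prop :=
  ∃ C : ℝ, ∀ᶠ δ in nhdsWithin (0 : ℝ) (Set.Ioi 0),
    ∀ x : EuclideanSpace ℝ (Fin 2), ‖x‖ ≤ δ → ‖f x‖ ≤ C * δ ^ N

/-- For every `C` and every width `w > 0` there are `E₀` and a nonzero function in the
range of the spectral projector `χ_{[E₀ - w, E₀]}(-Δ)` on `𝕋²` — i.e. a nontrivial
combination of exponentials `e^{i k · x}` with `|k|² ∈ [E₀ - w, E₀]` — vanishing to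
order at least `C` at `0`. -/
theorem stmt_17 (C : ℕ) (w : ℝ) (hw : 0 < w) :
    ∃ (E₀ : ℝ) (I : Finset (ℤ × ℤ)) (μ : ℤ × ℤ → ℂ),
      (∀ k ∈ I, E₀ - w ≤ ((k.1 ^ 2 + k.2 ^ 2 : ℤ) : ℝ) ∧ ((k.1 ^ 2 + k.2 ^ 2 : ℤ) : ℝ) ≤ E₀) ∧
      (∃ k ∈ I, μ k ≠ 0) ∧
      VanishesToOrder2
        (fun x => ∑ k ∈ I, μ k *
          Complex.exp (Complex.I * ((k.1 : ℂ) * (x 0 : ℂ) + (k.2 : ℂ) * (x 1 : ℂ)))) C := by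
  classical
  set m : ℕ := 2 * C + 1 with hm
  set Z : ℕ → GaussianInt := fun j => S17.G ^ j * S17.Gc ^ (m - j) with hZ
  set ϕ : ℕ → ℤ × ℤ := fun j => ((Z j).re, (Z j).im) with hϕ
  have hϕinj : ∀ j ∈ Finset.range (m + 1), ∀ j' ∈ Finset.range (m + 1), ϕ j = ϕ j' → j = j' := by
    intro j hj j' hj' h
    have hjm : j ≤ m := Nat.lt_succ_iff.mp (Finset.mem_range.mp hj)
    have hjm' : j' ≤ m := Nat.lt_succ_iff.mp (Finset.mem_range.mp hj')
    apply S17.inj hjm hjm'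
    rw [Zsqrtd.ext_iff]
    exact ⟨congrArg Prod.fst h, congrArg Prod.snd h⟩
  refine ⟨((25 ^ m : ℤ) : ℝ), (Finset.range (m + 1)).image ϕ,
    fun k => ∑ j ∈ Finset.range (m + 1), if ϕ j = k then (S17.P C).coeff j else 0, ?_, ?_, ?_⟩
  · intro k hk
    obtain ⟨j, hj, rfl⟩ := Finset.mem_image.mp hk
    have hjm : j ≤ m := Nat.lt_succ_iff.mp (Finset.mem_range.mp hj)
    have hnorm : (ϕ j).1 ^ 2 + (ϕ j).2 ^ 2 = 25 ^ m := by
      have h1 : Zsqrtd.norm (Z j) = 25 ^ m := by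
        rw [hZ]
        dsimp only
        rw [Zsqrtd.norm_mul, S17.znorm_pow, S17.znorm_pow, S17.norm_G, S17.norm_Gc,
          ← pow_add, Nat.add_sub_cancel' hjm]
      rw [← h1, Zsqrtd.norm_def]
      ring
    rw [hnorm]
    constructor
    · push_cast; linarith
    · push_cast; linarith
  · refine ⟨ϕ m, Finset.mem_image_of_mem ϕ (Finset.mem_range.mpr (Nat.lt_succ_self m)), ?_⟩
    have h1 : (∑ j ∈ Finset.range (m + 1), if ϕ j = ϕ m then (S17.P C).coeff j else 0)
        = (S17.P C).coeff m := by
      rw [Finset.sum_eq_single_of_mem m (Finset.mem_range.mpr (Nat.lt_succ_self m))]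
      · rw [if_pos rfl]
      · intro j hj hne
        exact if_neg fun h => hne (hϕinj j hj m (Finset.mem_range.mpr (Nat.lt_succ_self m)) h)
    show (∑ j ∈ Finset.range (m + 1), if ϕ j = ϕ m then (S17.P C).coeff j else 0) ≠ 0
    rw [h1, hm, S17.P_coeff_top]
    exact one_ne_zero
  · set R : ℝ := 1 + ∑ j ∈ Finset.range (m + 1), (|((Z j).re : ℝ)| + |((Z j).im : ℝ)|) with hR
    have hsumnn : (0:ℝ) ≤ ∑ j ∈ Finset.range (m + 1), (|((Z j).re : ℝ)| + |((Z j).im : ℝ)|) :=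
      Finset.sum_nonneg fun j _ => add_nonneg (abs_nonneg _) (abs_nonneg _)
    have hR1 : (1:ℝ) ≤ R := by rw [hR]; linarith
    have hR0 : (0:ℝ) < R := lt_of_lt_of_le one_pos hR1
    have hRj : ∀ j ∈ Finset.range (m + 1), |((Z j).re : ℝ)| + |((Z j).im : ℝ)| ≤ R := by
      intro j hj
      have h := Finset.single_le_sum
        (f := fun j => |((Z j).re : ℝ)| + |((Z j).im : ℝ)|)
        (fun j _ => add_nonneg (abs_nonneg _) (abs_nonneg _)) hj
      rw [hR]; linarith
    set K : ℝ := (∑ j ∈ Finset.range (m + 1), ‖(S17.P C).coeff j‖) * ((C:ℝ) + 2)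
      with hK
    refine ⟨K * R ^ (C + 1), ?_⟩
    have hev : ∀ᶠ δ in nhdsWithin (0:ℝ) (Set.Ioi 0), 0 < δ ∧ δ < 1 / R := by
      have h1 : ∀ᶠ δ in nhdsWithin (0:ℝ) (Set.Ioi 0), δ ∈ Set.Ioi (0:ℝ) :=
        eventually_mem_nhdsWithin
      have h2 : ∀ᶠ δ in nhdsWithin (0:ℝ) (Set.Ioi 0), δ < 1 / R := by
        apply Filter.Eventually.filter_mono nhdsWithin_le_nhds
        exact eventually_lt_nhds (by positivity)
      filter_upwards [h1, h2] with δ hδ hδ'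
      exact ⟨hδ, hδ'⟩
    filter_upwards [hev] with δ hδ x hx
    obtain ⟨hδ0, hδR⟩ := hδ
    have hδ1 : δ ≤ 1 := by
      have : 1 / R ≤ 1 := by
        rw [div_le_one hR0]; exact hR1
      linarith
    have hx0 : |x 0| ≤ δ := le_trans (S17.coord_abs x 0) hx
    have hx1 : |x 1| ≤ δ := le_trans (S17.coord_abs x 1) hx
    set v : ℂ := ((x 0 : ℝ) : ℂ) + ((x 1 : ℝ) : ℂ) * Complex.I with hv
    set vb : ℂ := ((x 0 : ℝ) : ℂ) - ((x 1 : ℝ) : ℂ) * Complex.I with hvb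
    set c : ℕ → ℂ := fun j => (((Z j).re : ℤ) : ℂ) * ((x 0 : ℝ) : ℂ)
      + (((Z j).im : ℤ) : ℂ) * ((x 1 : ℝ) : ℂ) with hc
    have hcval : ∀ j ∈ Finset.range (m + 1), c j =
        ((5:ℂ) ^ (2*C+1) * S17.q ^ (2*(j:ℤ) - (2*(C:ℤ)+1)) * vb
          + (5:ℂ) ^ (2*C+1) * S17.q ^ ((2*(C:ℤ)+1) - 2*(j:ℤ)) * v) / 2 := by
      intro j hj
      have hjm : j ≤ m := Nat.lt_succ_iff.mp (Finset.mem_range.mp hj)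
      have hA : ((Z j : GaussianInt) : ℂ)
          = (5:ℂ) ^ (2*C+1) * S17.q ^ (2*(j:ℤ) - (2*(C:ℤ)+1)) := by
        have h := S17.z_formula (m := m) (j := j) hjm
        rw [hZ]; dsimp only
        rw [h, hm]
        push_cast
        ring_nf
      have hB : ((star (Z j) : GaussianInt) : ℂ)
          = (5:ℂ) ^ (2*C+1) * S17.q ^ ((2*(C:ℤ)+1) - 2*(j:ℤ)) := by
        rw [hZ]; dsimp only
        rw [S17.star_prod]
        have h2 : S17.Gc ^ j * S17.G ^ (m - j)
            = S17.G ^ (m - j) * S17.Gc ^ (m - (m - j)) := by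
          rw [Nat.sub_sub_self hjm]; ring
        rw [h2, S17.z_formula (Nat.sub_le m j), hm]
        push_cast [Nat.cast_sub hjm, Nat.cast_sub (show j ≤ 2*C+1 by omega)]
        ring_nf
      have hAc : (((Z j).re : ℤ) : ℂ) + (((Z j).im : ℤ) : ℂ) * Complex.I
          = (5:ℂ) ^ (2*C+1) * S17.q ^ (2*(j:ℤ) - (2*(C:ℤ)+1)) := by
        rw [← hA, GaussianInt.toComplex_def]
      have hBc : (((Z j).re : ℤ) : ℂ) - (((Z j).im : ℤ) : ℂ) * Complex.I
          = (5:ℂ) ^ (2*C+1) * S17.q ^ ((2*(C:ℤ)+1) - 2*(j:ℤ)) := by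
        rw [← hB, GaussianInt.toComplex_def]
        simp [Zsqrtd.re_star, Zsqrtd.im_star]
        ring
      rw [hc]; dsimp only
      rw [← hAc, ← hBc, hv, hvb]
      linear_combination ((((Z j).im : ℤ) : ℂ) * ((x 1 : ℝ) : ℂ)) * Complex.I_sq
    -- rewrite the sum over the image
    rw [Finset.sum_image hϕinj]
    have hterm : ∀ j ∈ Finset.range (m + 1),
        (∑ j' ∈ Finset.range (m + 1), if ϕ j' = ϕ j then (S17.P C).coeff j' else 0) *
            Complex.exp (Complex.I * (((ϕ j).1 : ℂ) * ((x 0 : ℝ) : ℂ)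
              + ((ϕ j).2 : ℂ) * ((x 1 : ℝ) : ℂ)))
          = (S17.P C).coeff j * Complex.exp (Complex.I * c j) := by
      intro j hj
      have h1 : (∑ j' ∈ Finset.range (m + 1), if ϕ j' = ϕ j then (S17.P C).coeff j' else 0)
          = (S17.P C).coeff j := by
        rw [Finset.sum_eq_single_of_mem j hj]
        · rw [if_pos rfl]
        · intro j' hj' hne
          exact if_neg fun h => hne (hϕinj j' hj' j hj h)
      rw [h1, hc]
    rw [Finset.sum_congr rfl hterm]
    -- Taylor cancellation
    have hT : ∑ j ∈ Finset.range (m + 1), (S17.P C).coeff j *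
        (∑ n ∈ Finset.range (C + 1), (Complex.I * c j) ^ n / n.factorial) = 0 := by
      have hswap : ∀ j ∈ Finset.range (m + 1), (S17.P C).coeff j *
          (∑ n ∈ Finset.range (C + 1), (Complex.I * c j) ^ n / n.factorial)
          = ∑ n ∈ Finset.range (C + 1),
              ((S17.P C).coeff j * (c j) ^ n) * (Complex.I ^ n / n.factorial) := by
        intro j hj
        rw [Finset.mul_sum]
        apply Finset.sum_congr rfl
        intro n hn
        rw [mul_pow]
        ring
      rw [Finset.sum_congr rfl hswap, Finset.sum_comm]
      apply Finset.sum_eq_zero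
      intro n hn
      have hnC : n ≤ C := Nat.lt_succ_iff.mp (Finset.mem_range.mp hn)
      rw [← Finset.sum_mul]
      have hmom := S17.moment C n hnC v vb
      have hrw : ∑ j ∈ Finset.range (m + 1), (S17.P C).coeff j * (c j) ^ n
          = ∑ j ∈ Finset.range (2*C+2), (S17.P C).coeff j *
            (((5:ℂ)^(2*C+1) * S17.q^(2*(j:ℤ) - (2*(C:ℤ)+1)) * vb
              + (5:ℂ)^(2*C+1) * S17.q^((2*(C:ℤ)+1) - 2*(j:ℤ)) * v) / 2) ^ n := by
        apply Finset.sum_congr (by rw [hm])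
        intro j hj
        rw [hcval j (by rw [hm]; exact hj)]
      rw [hrw, hmom, zero_mul]
    -- final bound
    have hsplit : ∑ j ∈ Finset.range (m + 1), (S17.P C).coeff j * Complex.exp (Complex.I * c j)
        = ∑ j ∈ Finset.range (m + 1), (S17.P C).coeff j *
            (Complex.exp (Complex.I * c j)
              - ∑ n ∈ Finset.range (C + 1), (Complex.I * c j) ^ n / n.factorial) := by
      rw [show (∑ j ∈ Finset.range (m + 1), (S17.P C).coeff j *
            (Complex.exp (Complex.I * c j)
              - ∑ n ∈ Finset.range (C + 1), (Complex.I * c j) ^ n / n.factorial))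
          = (∑ j ∈ Finset.range (m + 1), (S17.P C).coeff j * Complex.exp (Complex.I * c j))
            - (∑ j ∈ Finset.range (m + 1), (S17.P C).coeff j *
                (∑ n ∈ Finset.range (C + 1), (Complex.I * c j) ^ n / n.factorial)) from by
        rw [← Finset.sum_sub_distrib]
        apply Finset.sum_congr rfl
        intro j hj
        ring]
      rw [hT, sub_zero]
    rw [hsplit]
    calc ‖∑ j ∈ Finset.range (m + 1), (S17.P C).coeff j *
            (Complex.exp (Complex.I * c j)
              - ∑ n ∈ Finset.range (C + 1), (Complex.I * c j) ^ n / n.factorial)‖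
        ≤ ∑ j ∈ Finset.range (m + 1), ‖(S17.P C).coeff j *
            (Complex.exp (Complex.I * c j)
              - ∑ n ∈ Finset.range (C + 1), (Complex.I * c j) ^ n / n.factorial)‖ :=
          norm_sum_le _ _
      _ ≤ ∑ j ∈ Finset.range (m + 1), ‖(S17.P C).coeff j‖ *
            (((C:ℝ) + 2) * (R ^ (C + 1) * δ ^ (C + 1))) := by
          apply Finset.sum_le_sum
          intro j hj
          rw [norm_mul]
          apply mul_le_mul_of_nonneg_left _ (_root_.norm_nonneg _)
          have hcj : ‖c j‖ ≤ R * δ := by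
            have h1 : ‖c j‖ ≤ |((Z j).re : ℝ)| * |x 0| + |((Z j).im : ℝ)| * |x 1| := by
              rw [hc]; dsimp only
              refine le_trans (norm_add_le _ _) ?_
              rw [norm_mul, norm_mul]
              simp only [Complex.norm_intCast, Complex.norm_real, Real.norm_eq_abs]
              exact le_refl _
            have h2 : |((Z j).re : ℝ)| * |x 0| + |((Z j).im : ℝ)| * |x 1|
                ≤ (|((Z j).re : ℝ)| + |((Z j).im : ℝ)|) * δ := by
              have := abs_nonneg (x 0)
              nlinarith [abs_nonneg ((Z j).re : ℝ), abs_nonneg ((Z j).im : ℝ)]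
            refine le_trans h1 (le_trans h2 ?_)
            exact mul_le_mul_of_nonneg_right (hRj j hj) hδ0.le
          have habs1 : ‖Complex.I * c j‖ ≤ 1 := by
            rw [norm_mul, Complex.norm_I, one_mul]
            have : R * δ < 1 := by
              rw [← lt_div_iff₀' hR0]
              exact hδR
            linarith
          have hb := Complex.exp_bound habs1 (Nat.succ_pos C)
          refine le_trans hb ?_
          rw [norm_mul, Complex.norm_I, one_mul]
          have e1 : ‖c j‖ ^ (C+1) ≤ R ^ (C+1) * δ ^ (C+1) := by
            rw [← mul_pow]
            exact pow_le_pow_left₀ (_root_.norm_nonneg _) hcj _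
          have h1 : (1:ℝ) ≤ (C.succ.factorial : ℝ) * (C.succ : ℝ) := by
            have h : 1 ≤ C.succ.factorial * C.succ := Nat.one_le_iff_ne_zero.mpr
              (Nat.mul_ne_zero (Nat.factorial_ne_zero _) (Nat.succ_ne_zero _))
            exact_mod_cast h
          have h2 : ((C.succ.factorial : ℝ) * (C.succ : ℝ))⁻¹ ≤ 1 := by
            rw [inv_le_one_iff₀]
            right
            exact h1
          have h3 : (C.succ.succ : ℝ) * ((C.succ.factorial : ℝ) * (C.succ : ℝ))⁻¹
              ≤ (C:ℝ) + 2 := by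
            have hcast : (C.succ.succ : ℝ) = (C:ℝ) + 2 := by push_cast; ring
            calc (C.succ.succ : ℝ) * ((C.succ.factorial : ℝ) * (C.succ : ℝ))⁻¹
                ≤ (C.succ.succ : ℝ) * 1 := by
                  apply mul_le_mul_of_nonneg_left h2 (by positivity)
              _ = (C:ℝ) + 2 := by rw [mul_one, hcast]
          refine le_trans (mul_le_mul e1 h3 (by positivity) (by positivity)) (le_of_eq ?_)
          ring
      _ = K * R ^ (C + 1) * δ ^ (C + 1) := by
          rw [← Finset.sum_mul, hK]
          ring
      _ ≤ K * R ^ (C + 1) * δ ^ C := by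
          have hKR : 0 ≤ K * R ^ (C + 1) := by
            apply mul_nonneg _ (pow_nonneg hR0.le _)
            exact mul_nonneg (Finset.sum_nonneg fun j _ => _root_.norm_nonneg _)
              (by positivity)
          exact mul_le_mul_of_nonneg_left
            (pow_le_pow_of_le_one hδ0.le hδ1 (Nat.le_succ C)) hKR
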